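/- arXiv:2409.16324 — 4 statements merged into one kernel-verified Lean document; each statement's English description precedes it below -/
import Mathlib

section
/- For any finite simple graph G, L(G) ≤ 2·ℓ(G), where ℓ(G) and L(G) are respectively the minimum and maximum of ν(G \ F) over all maximum matchings F of G. -/
/-- `F` is a matching of `G`: a set of edges of `G` that are pairwise non-adjacent. -/
def IsMatchingSet {V : Type*} (G : SimpleGraph V) (F : Set (Sym2 V)) : Prop :=
  F ⊆ G.edgeSet ∧ ∀ e ∈ F, ∀ f ∈ F, e ≠ f → ∀ v : V, ¬(v ∈ e ∧ v ∈ f)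

/-- The matching number ν(G): the largest size of a matching of `G`. -/
noncomputable def matchingNumber {V : Type*} (G : SimpleGraph V) : ℕ :=
  sSup {n | ∃ F : Set (Sym2 V), IsMatchingSet G F ∧ F.ncard = n}

/-- A maximum matching: a matching of size ν(G). -/
def IsMaximumMatching {V : Type*} (G : SimpleGraph V) (F : Set (Sym2 V)) : Prop :=
  IsMatchingSet G F ∧ F.ncard = matchingNumber G

/-- A perfect matching: a matching covering every vertex. -/
def IsPerfectMatchingSet {V : Type*} (G : SimpleGraph V) (F : Set (Sym2 V)) : Prop :=
  IsMatchingSet G F ∧ ∀ v : V, ∃ e ∈ F, v ∈ e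

/-- ℓ(G): the minimum of ν(G \ F) over all maximum matchings F of G. -/
noncomputable def ellNum {V : Type*} (G : SimpleGraph V) : ℕ :=
  sInf {n | ∃ F, IsMaximumMatching G F ∧ matchingNumber (G.deleteEdges F) = n}

/-- L(G): the maximum of ν(G \ F) over all maximum matchings F of G. -/
noncomputable def LNum {V : Type*} (G : SimpleGraph V) : ℕ :=
  sSup {n | ∃ F, IsMaximumMatching G F ∧ matchingNumber (G.deleteEdges F) = n}

/-- ν_k(G): the maximum number of edges of a k-edge-colorable subgraph of G,
equivalently the largest size of a union of k matchings of G. -/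
noncomputable def nuK {V : Type*} (G : SimpleGraph V) (k : ℕ) : ℕ :=
  sSup {n | ∃ f : Fin k → Set (Sym2 V), (∀ i, IsMatchingSet G (f i)) ∧ (⋃ i, f i).ncard = n}

section Aux

variable {V : Type*} [Fintype V]

private lemma msizes_nonempty (G : SimpleGraph V) :
    Set.Nonempty {n | ∃ F : Set (Sym2 V), IsMatchingSet G F ∧ F.ncard = n} :=
  ⟨0, ∅, ⟨Set.empty_subset _, by simp⟩, by simp⟩

private lemma msizes_bdd (G : SimpleGraph V) :
    BddAbove {n | ∃ F : Set (Sym2 V), IsMatchingSet G F ∧ F.ncard = n} := by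
  refine ⟨Nat.card (Sym2 V), ?_⟩
  rintro n ⟨F, _, rfl⟩
  calc F.ncard ≤ (Set.univ : Set (Sym2 V)).ncard :=
        Set.ncard_le_ncard (Set.subset_univ F) (Set.toFinite _)
    _ = Nat.card (Sym2 V) := Set.ncard_univ _

private lemma ncard_le_matchingNumber {G : SimpleGraph V} {F : Set (Sym2 V)}
    (h : IsMatchingSet G F) : F.ncard ≤ matchingNumber G :=
  le_csSup (msizes_bdd G) ⟨F, h, rfl⟩

private lemma exists_maximumMatching (G : SimpleGraph V) :
    ∃ F, IsMaximumMatching G F := by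
  have h := Nat.sSup_mem (msizes_nonempty G) (msizes_bdd G)
  obtain ⟨F, hF, hc⟩ := h
  exact ⟨F, hF, hc⟩

/-- Key: for maximum matchings F₁, F₂ and any matching N of G \ F₂,
|N| ≤ 2 ν(G \ F₁). -/
private lemma key (G : SimpleGraph V) {F₁ F₂ N : Set (Sym2 V)}
    (h1 : IsMaximumMatching G F₁) (h2 : IsMaximumMatching G F₂)
    (hN : IsMatchingSet (G.deleteEdges F₂) N) :
    N.ncard ≤ 2 * matchingNumber (G.deleteEdges F₁) := by
  have hNsub : N ⊆ G.edgeSet \ F₂ := by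
    have := hN.1; rwa [SimpleGraph.edgeSet_deleteEdges] at this
  set A : Set (Sym2 V) := N ∩ F₁ with hA
  set B : Set (Sym2 V) := N \ F₁ with hB
  set C : Set (Sym2 V) := {f ∈ F₂ | ∃ a ∈ A, ∃ v : V, v ∈ f ∧ v ∈ a} with hC
  have hCsub : C ⊆ F₂ := fun f hf => hf.1
  -- A is disjoint from F₂
  have hAF₂ : ∀ a ∈ A, a ∉ F₂ := fun a ha => (hNsub ha.1).2
  -- B is a matching of G \ F₁
  have hBm : IsMatchingSet (G.deleteEdges F₁) B := by
    constructor
    · intro e he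
      rw [SimpleGraph.edgeSet_deleteEdges]
      exact ⟨(hNsub he.1).1, he.2⟩
    · intro e he f hf
      exact hN.2 e he.1 f hf.1
  -- C is a matching of G \ F₁
  have hCm : IsMatchingSet (G.deleteEdges F₁) C := by
    constructor
    · intro f hf
      rw [SimpleGraph.edgeSet_deleteEdges]
      refine ⟨h2.1.1 hf.1, ?_⟩
      intro hfF₁
      obtain ⟨a, haA, v, hvf, hva⟩ := hf.2
      have hne : f ≠ a := fun h => (hAF₂ a haA) (h ▸ hf.1)
      exact h1.1.2 f hfF₁ a haA.2 hne v ⟨hvf, hva⟩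
    · intro e he f hf
      exact h2.1.2 e (hCsub he) f (hCsub hf)
  -- (F₂ \ C) ∪ A is a matching of G
  have hM : IsMatchingSet G ((F₂ \ C) ∪ A) := by
    constructor
    · rintro e (he | he)
      · exact h2.1.1 he.1
      · exact (hNsub he.1).1
    · rintro e (he | he) f (hf | hf) hne v ⟨hve, hvf⟩
      · exact h2.1.2 e he.1 f hf.1 hne v ⟨hve, hvf⟩
      · exact he.2 ⟨he.1, f, hf, v, hve, hvf⟩
      · exact hf.2 ⟨hf.1, e, he, v, hvf, hve⟩
      · exact hN.2 e he.1 f hf.1 hne v ⟨hve, hvf⟩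
  -- cardinality bookkeeping
  have hdisj : Disjoint (F₂ \ C) A := by
    rw [Set.disjoint_left]
    rintro e he heA
    exact hAF₂ e heA he.1
  have hcard : (F₂ \ C).ncard + A.ncard ≤ F₂.ncard := by
    have h1' : ((F₂ \ C) ∪ A).ncard ≤ matchingNumber G := ncard_le_matchingNumber hM
    rw [Set.ncard_union_eq hdisj (Set.toFinite _) (Set.toFinite _)] at h1'
    rw [h2.2]
    exact h1'
  have hAC : A.ncard ≤ C.ncard := by
    have := Set.ncard_diff_add_ncard_of_subset hCsub (Set.toFinite _)
    omega
  have hNcard : N.ncard = A.ncard + B.ncard :=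
    (Set.ncard_inter_add_ncard_diff_eq_ncard N F₁ (Set.toFinite _)).symm
  have hCle : C.ncard ≤ matchingNumber (G.deleteEdges F₁) := ncard_le_matchingNumber hCm
  have hBle : B.ncard ≤ matchingNumber (G.deleteEdges F₁) := ncard_le_matchingNumber hBm
  omega

end Aux

theorem LNum_le_two_mul_ellNum {V : Type*} [Fintype V] (G : SimpleGraph V) :
    LNum G ≤ 2 * ellNum G := by
  obtain ⟨F₀, hF₀⟩ := exists_maximumMatching G
  have hne : Set.Nonempty {n | ∃ F, IsMaximumMatching G F ∧
      matchingNumber (G.deleteEdges F) = n} :=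
    ⟨matchingNumber (G.deleteEdges F₀), F₀, hF₀, rfl⟩
  obtain ⟨F₁, hF₁, hF₁ℓ⟩ := Nat.sInf_mem hne
  refine csSup_le hne ?_
  rintro n ⟨F₂, hF₂, rfl⟩
  obtain ⟨N, hNm, hNc⟩ := exists_maximumMatching (G.deleteEdges F₂)
  rw [← hNc]
  calc N.ncard ≤ 2 * matchingNumber (G.deleteEdges F₁) := key G hF₁ hF₂ hNm
    _ = 2 * ellNum G := by rw [hF₁ℓ]; rfl
end

section
/- If a finite simple graph G has a perfect matching, then L(G) ≤ (3/2)·ℓ(G), i.e., 2·L(G) ≤ 3·ℓ(G). -/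
namespace TwoLThreeEll

open Set

variable {V : Type*}

def PW (X : Set (Sym2 V)) : Prop :=
  ∀ e ∈ X, ∀ f ∈ X, e ≠ f → ∀ v : V, ¬(v ∈ e ∧ v ∈ f)

lemma PW.mono {X Y : Set (Sym2 V)} (h : PW Y) (hs : X ⊆ Y) : PW X :=
  fun e he f hf hef v => h e (hs he) f (hs hf) hef v

lemma PW.eq_of_mem {X : Set (Sym2 V)} (h : PW X) {e f : Sym2 V} {z : V}
    (he : e ∈ X) (hf : f ∈ X) (hze : z ∈ e) (hzf : z ∈ f) : e = f := by
  by_contra hne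
  exact h e he f hf hne z ⟨hze, hzf⟩

lemma PW.insert' {M : Set (Sym2 V)} (hM : PW M) {g : Sym2 V}
    (h : ∀ d ∈ M, d ≠ g → ∀ z : V, z ∈ g → z ∈ d → False) : PW (insert g M) := by
  intro a ha b hb hab z hz
  rcases ha with rfl | ha <;> rcases hb with rfl | hb
  · exact hab rfl
  · exact h b hb (fun he => hab he.symm) z hz.1 hz.2
  · exact h a ha hab z hz.2 hz.1
  · exact hM a ha b hb hab z hz

lemma sym2_repr (e : Sym2 V) : ∃ u v, e = s(u, v) := by
  induction e using Sym2.ind with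
  | _ u v => exact ⟨u, v, rfl⟩

lemma other_repr {f : Sym2 V} {u : V} (hu : u ∈ f) : ∃ w, f = s(u, w) := by
  obtain ⟨a, b, rfl⟩ := sym2_repr f
  rcases Sym2.mem_iff.mp hu with rfl | rfl
  · exact ⟨b, rfl⟩
  · exact ⟨a, Sym2.eq_swap⟩

lemma ncard_le_diff_add {α : Type*} [Finite α] (A S : Set α) :
    A.ncard ≤ (A \ S).ncard + S.ncard := by
  have h : A ⊆ (A \ S) ∪ S := by
    intro x hx
    by_cases hxS : x ∈ S
    · exact Or.inr hxS
    · exact Or.inl ⟨hx, hxS⟩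
  exact (ncard_le_ncard h (toFinite _)).trans (ncard_union_le _ _)

def Bad (F N F' : Set (Sym2 V)) : Set (Sym2 V × V) :=
  {p | p.1 ∈ N ∧ p.1 ∈ F' ∧ p.2 ∈ p.1 ∧ ∀ f ∈ F, p.2 ∉ f}

/-- The statement proved by induction. -/
def Goal (F N F' : Set (Sym2 V)) : Prop :=
  ∃ M, M ⊆ (F ∪ N) \ F' ∧ PW M ∧ 2 * N.ncard ≤ 3 * M.ncard + (Bad F N F').ncard

/-- The induction hypothesis. -/
def IH (V : Type*) (n : ℕ) : Prop :=
  ∀ F N F' : Set (Sym2 V), PW F → PW N → PW F' →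
    (∀ e ∈ F, ¬ e.IsDiag) → (∀ e ∈ N, ¬ e.IsDiag) → Disjoint F N →
    N.ncard ≤ n → Goal F N F'

section Steps

variable [Finite V] {n : ℕ} {F N F' : Set (Sym2 V)} {u v w x : V}

lemma stepBgood (ih : IH V n) (hF : PW F) (hN : PW N) (hF' : PW F')
    (ndF : ∀ e ∈ F, ¬ e.IsDiag) (ndN : ∀ e ∈ N, ¬ e.IsDiag) (hdisj : Disjoint F N)
    (hcard : N.ncard ≤ n + 1) (heN : s(u, v) ∈ N) (heF' : s(u, v) ∈ F')
    (hfu : s(u, w) ∈ F) (hgood : ∀ d ∈ N, w ∈ d → d ∈ F') : Goal F N F' := by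
  have heNF : s(u, v) ∉ F := disjoint_right.mp hdisj heN
  have hfuF' : s(u, w) ∉ F' := by
    intro h
    have heq : s(u, w) = s(u, v) :=
      hF'.eq_of_mem h heF' (Sym2.mem_mk_left u w) (Sym2.mem_mk_left u v)
    exact heNF (heq ▸ hfu)
  set N₂ : Set (Sym2 V) := N \ {s(u, v)} with hN₂
  set F₂ : Set (Sym2 V) := F \ {s(u, w)} with hF₂
  obtain ⟨M₂, hMsub, hMPW, hMcount⟩ :=
    ih F₂ N₂ F' (hF.mono diff_subset) (hN.mono diff_subset) hF'
      (fun e he => ndF e he.1) (fun e he => ndN e he.1)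
      ((hdisj.mono_left diff_subset).mono_right diff_subset)
      (by rw [hN₂, ncard_diff_singleton_of_mem heN]; omega)
  have hfuM₂ : s(u, w) ∉ M₂ := by
    intro h
    rcases (hMsub h).1 with h' | h'
    · exact h'.2 rfl
    · exact disjoint_left.mp hdisj hfu h'.1
  refine ⟨insert (s(u, w)) M₂, ?_, ?_, ?_⟩
  · intro a ha
    rcases ha with rfl | ha
    · exact ⟨Or.inl hfu, hfuF'⟩
    · obtain ⟨h1, h2⟩ := hMsub ha
      exact ⟨h1.imp (fun h => h.1) (fun h => h.1), h2⟩
  · refine hMPW.insert' ?_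
    intro d hd hne z hzg hzd
    obtain ⟨hd', hdF'⟩ := hMsub hd
    rcases Sym2.mem_iff.mp hzg with rfl | rfl
    · rcases hd' with h | h
      · exact h.2 (hF.eq_of_mem h.1 hfu hzd (Sym2.mem_mk_left z w))
      · exact h.2 (hN.eq_of_mem h.1 heN hzd (Sym2.mem_mk_left z v))
    · rcases hd' with h | h
      · exact h.2 (hF.eq_of_mem h.1 hfu hzd (Sym2.mem_mk_right u z))
      · exact hdF' (hgood d h.1 hzd)
  · -- counting
    set T : Set (Sym2 V × V) := {p | p.1 ∈ N ∧ p.2 = w ∧ p.2 ∈ p.1} with hT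
    have hTsub : T.ncard ≤ 1 := by
      rw [ncard_le_one (toFinite _)]
      rintro ⟨d, z⟩ ⟨hd, rfl, hzd⟩ ⟨d', z'⟩ ⟨hd', rfl, hzd'⟩
      have : d = d' := hN.eq_of_mem hd hd' hzd hzd'
      simp [this]
    have hBsub : Bad F₂ N₂ F' ⊆ Bad F N F' ∪ T := by
      rintro ⟨d, z⟩ ⟨hdN₂, hdF', hzd, hcov⟩
      by_cases hall : ∀ f ∈ F, z ∉ f
      · exact Or.inl ⟨hdN₂.1, hdF', hzd, hall⟩
      · push_neg at hall
        obtain ⟨f, hfF, hzf⟩ := hall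
        have hffu : f = s(u, w) := by
          by_contra hne
          exact hcov f ⟨hfF, hne⟩ hzf
        subst hffu
        rcases Sym2.mem_iff.mp hzf with rfl | rfl
        · exact absurd (hN.eq_of_mem hdN₂.1 heN hzd (Sym2.mem_mk_left z v))
            (fun h => hdN₂.2 h)
        · exact Or.inr ⟨hdN₂.1, rfl, hzd⟩
    have hBcard : (Bad F₂ N₂ F').ncard ≤ (Bad F N F').ncard + 1 := by
      calc (Bad F₂ N₂ F').ncard ≤ (Bad F N F' ∪ T).ncard :=
            ncard_le_ncard hBsub (toFinite _)
        _ ≤ (Bad F N F').ncard + T.ncard := ncard_union_le _ _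
        _ ≤ (Bad F N F').ncard + 1 := by omega
    have hN₂card : N₂.ncard = N.ncard - 1 := ncard_diff_singleton_of_mem heN
    have hNpos : 0 < N.ncard := (ncard_pos (toFinite _)).mpr ⟨_, heN⟩
    rw [ncard_insert_of_notMem hfuM₂]
    omega

lemma stepB0 (ih : IH V n) (hF : PW F) (hN : PW N) (hF' : PW F')
    (ndF : ∀ e ∈ F, ¬ e.IsDiag) (ndN : ∀ e ∈ N, ¬ e.IsDiag) (hdisj : Disjoint F N)
    (hcard : N.ncard ≤ n + 1) (heN : s(u, v) ∈ N) (heF' : s(u, v) ∈ F')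
    (hcu : ∀ f ∈ F, u ∉ f) (hcv : ∀ f ∈ F, v ∉ f) : Goal F N F' := by
  have huv : u ≠ v := by simpa using ndN _ heN
  set N₂ : Set (Sym2 V) := N \ {s(u, v)} with hN₂
  obtain ⟨M₂, hMsub, hMPW, hMcount⟩ :=
    ih F N₂ F' hF (hN.mono diff_subset) hF' ndF (fun e he => ndN e he.1)
      (hdisj.mono_right diff_subset)
      (by rw [hN₂, ncard_diff_singleton_of_mem heN]; omega)
  refine ⟨M₂, ?_, hMPW, ?_⟩
  · exact hMsub.trans (diff_subset_diff_left (union_subset_union_right _ diff_subset))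
  · have h1 : (s(u, v), v) ∉ Bad F N₂ F' := fun h => h.1.2 rfl
    have h2 : (s(u, v), u) ∉ insert (s(u, v), v) (Bad F N₂ F') := by
      intro h
      rcases h with h | h
      · exact huv (by injection h with _ h2)
      · exact h.1.2 rfl
    have h3 : insert (s(u, v), u) (insert (s(u, v), v) (Bad F N₂ F')) ⊆ Bad F N F' := by
      rintro p hp
      rcases hp with rfl | rfl | hp
      · exact ⟨heN, heF', Sym2.mem_mk_left u v, hcu⟩
      · exact ⟨heN, heF', Sym2.mem_mk_right u v, hcv⟩
      · exact ⟨hp.1.1, hp.2⟩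
    have h4 : (Bad F N₂ F').ncard + 2 ≤ (Bad F N F').ncard := by
      have h5 := ncard_le_ncard h3 (toFinite _)
      rwa [ncard_insert_of_notMem h2, ncard_insert_of_notMem h1] at h5
    have hN₂card : N₂.ncard = N.ncard - 1 := ncard_diff_singleton_of_mem heN
    have hNpos : 0 < N.ncard := (ncard_pos (toFinite _)).mpr ⟨_, heN⟩
    omega

lemma stepB1bad (ih : IH V n) (hF : PW F) (hN : PW N) (hF' : PW F')
    (ndF : ∀ e ∈ F, ¬ e.IsDiag) (ndN : ∀ e ∈ N, ¬ e.IsDiag) (hdisj : Disjoint F N)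
    (hcard : N.ncard ≤ n + 1) (heN : s(u, v) ∈ N) (heF' : s(u, v) ∈ F')
    (hfu : s(u, w) ∈ F) {e₂ : Sym2 V} (he₂N : e₂ ∈ N) (hwe₂ : w ∈ e₂) (he₂F' : e₂ ∉ F')
    (hcv : ∀ f ∈ F, v ∉ f) : Goal F N F' := by
  have heNF : s(u, v) ∉ F := disjoint_right.mp hdisj heN
  have huw : u ≠ w := by simpa using ndF _ hfu
  have hwv : w ≠ v := by
    rintro rfl
    exact heNF hfu
  have hfuF' : s(u, w) ∉ F' := by
    intro h
    have heq : s(u, w) = s(u, v) :=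
      hF'.eq_of_mem h heF' (Sym2.mem_mk_left u w) (Sym2.mem_mk_left u v)
    exact heNF (heq ▸ hfu)
  have hee₂ : s(u, v) ≠ e₂ := by
    rintro rfl
    rcases Sym2.mem_iff.mp hwe₂ with rfl | rfl
    · exact huw rfl
    · exact hwv rfl
  set N₂ : Set (Sym2 V) := N \ {s(u, v), e₂} with hN₂
  set F₂ : Set (Sym2 V) := F \ {s(u, w)} with hF₂
  obtain ⟨M₂, hMsub, hMPW, hMcount⟩ :=
    ih F₂ N₂ F' (hF.mono diff_subset) (hN.mono diff_subset) hF'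
      (fun e he => ndF e he.1) (fun e he => ndN e he.1)
      ((hdisj.mono_left diff_subset).mono_right diff_subset)
      (by
        have hsub : N₂ ⊆ N \ {s(u, v)} := diff_subset_diff_right (by simp)
        have := ncard_le_ncard hsub (toFinite _)
        rw [ncard_diff_singleton_of_mem heN] at this
        omega)
  have hfuM₂ : s(u, w) ∉ M₂ := by
    intro h
    rcases (hMsub h).1 with h' | h'
    · exact h'.2 rfl
    · exact disjoint_left.mp hdisj hfu h'.1
  refine ⟨insert (s(u, w)) M₂, ?_, ?_, ?_⟩
  · intro a ha
    rcases ha with rfl | ha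
    · exact ⟨Or.inl hfu, hfuF'⟩
    · obtain ⟨h1, h2⟩ := hMsub ha
      exact ⟨h1.imp (fun h => h.1) (fun h => h.1), h2⟩
  · refine hMPW.insert' ?_
    intro d hd hne z hzg hzd
    obtain ⟨hd', hdF'⟩ := hMsub hd
    rcases Sym2.mem_iff.mp hzg with rfl | rfl
    · rcases hd' with h | h
      · exact h.2 (hF.eq_of_mem h.1 hfu hzd (Sym2.mem_mk_left z w))
      · exact h.2 (Or.inl (hN.eq_of_mem h.1 heN hzd (Sym2.mem_mk_left z v)))
    · rcases hd' with h | h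
      · exact h.2 (hF.eq_of_mem h.1 hfu hzd (Sym2.mem_mk_right u z))
      · exact h.2 (Or.inr (hN.eq_of_mem h.1 he₂N hzd hwe₂))
  · -- counting
    have hevBad : (s(u, v), v) ∈ Bad F N F' := ⟨heN, heF', Sym2.mem_mk_right u v, hcv⟩
    have hevB₂ : (s(u, v), v) ∉ Bad F₂ N₂ F' := fun h => h.1.2 (Or.inl rfl)
    have hBsub : insert (s(u, v), v) (Bad F₂ N₂ F') ⊆ Bad F N F' := by
      rintro ⟨d, z⟩ hp
      rcases hp with hp | ⟨hdN₂, hdF', hzd, hcov⟩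
      · injection hp with h1 h2
        subst h1; subst h2
        exact hevBad
      · refine ⟨hdN₂.1, hdF', hzd, ?_⟩
        intro f hfF hzf
        by_cases hffu : f = s(u, w)
        · subst hffu
          rcases Sym2.mem_iff.mp hzf with rfl | rfl
          · exact hdN₂.2 (Or.inl (hN.eq_of_mem hdN₂.1 heN hzd (Sym2.mem_mk_left z v)))
          · exact hdN₂.2 (Or.inr (hN.eq_of_mem hdN₂.1 he₂N hzd hwe₂))
        · exact hcov f ⟨hfF, hffu⟩ hzf
    have hBcard : (Bad F₂ N₂ F').ncard + 1 ≤ (Bad F N F').ncard := by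
      have h5 := ncard_le_ncard hBsub (toFinite _)
      rwa [ncard_insert_of_notMem hevB₂] at h5
    have hNle : N.ncard ≤ N₂.ncard + 2 := by
      have h6 : N.ncard ≤ N₂.ncard + ({s(u, v), e₂} : Set (Sym2 V)).ncard :=
        ncard_le_diff_add N {s(u, v), e₂}
      have a1 := ncard_insert_le (s(u, v)) ({e₂} : Set (Sym2 V))
      have a3 : ({e₂} : Set (Sym2 V)).ncard = 1 := ncard_singleton _
      omega
    rw [ncard_insert_of_notMem hfuM₂]
    omega

lemma stepBboth (ih : IH V n) (hF : PW F) (hN : PW N) (hF' : PW F')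
    (ndF : ∀ e ∈ F, ¬ e.IsDiag) (ndN : ∀ e ∈ N, ¬ e.IsDiag) (hdisj : Disjoint F N)
    (hcard : N.ncard ≤ n + 1) (heN : s(u, v) ∈ N) (heF' : s(u, v) ∈ F')
    (hfu : s(u, w) ∈ F) (hfv : s(v, x) ∈ F)
    {e₂ e₃ : Sym2 V} (he₂N : e₂ ∈ N) (hwe₂ : w ∈ e₂) (he₂F' : e₂ ∉ F')
    (he₃N : e₃ ∈ N) (hxe₃ : x ∈ e₃) (he₃F' : e₃ ∉ F') : Goal F N F' := by
  have heNF : s(u, v) ∉ F := disjoint_right.mp hdisj heN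
  have huv : u ≠ v := by simpa using ndN _ heN
  have huw : u ≠ w := by simpa using ndF _ hfu
  have hvx : v ≠ x := by simpa using ndF _ hfv
  have hwv : w ≠ v := by rintro rfl; exact heNF hfu
  have hxu : x ≠ u := by
    rintro rfl
    exact heNF (Sym2.eq_swap ▸ hfv)
  have hfufv : s(u, w) ≠ s(v, x) := by
    intro h
    have hv : v ∈ s(u, w) := h ▸ Sym2.mem_mk_left v x
    rcases Sym2.mem_iff.mp hv with rfl | rfl
    · exact huv rfl
    · exact hwv rfl
  have hfuF' : s(u, w) ∉ F' := by
    intro h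
    have heq : s(u, w) = s(u, v) :=
      hF'.eq_of_mem h heF' (Sym2.mem_mk_left u w) (Sym2.mem_mk_left u v)
    exact heNF (heq ▸ hfu)
  have hfvF' : s(v, x) ∉ F' := by
    intro h
    have heq : s(v, x) = s(u, v) :=
      hF'.eq_of_mem h heF' (Sym2.mem_mk_left v x) (Sym2.mem_mk_right u v)
    exact heNF (heq ▸ hfv)
  have hee₂ : s(u, v) ≠ e₂ := by
    rintro rfl
    rcases Sym2.mem_iff.mp hwe₂ with rfl | rfl
    · exact huw rfl
    · exact hwv rfl
  have hee₃ : s(u, v) ≠ e₃ := by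
    rintro rfl
    rcases Sym2.mem_iff.mp hxe₃ with rfl | rfl
    · exact hxu rfl
    · exact hvx rfl
  set N₂ : Set (Sym2 V) := N \ {s(u, v), e₂, e₃} with hN₂
  set F₂ : Set (Sym2 V) := F \ {s(u, w), s(v, x)} with hF₂
  obtain ⟨M₂, hMsub, hMPW, hMcount⟩ :=
    ih F₂ N₂ F' (hF.mono diff_subset) (hN.mono diff_subset) hF'
      (fun e he => ndF e he.1) (fun e he => ndN e he.1)
      ((hdisj.mono_left diff_subset).mono_right diff_subset)
      (by
        have hsub : N₂ ⊆ N \ {s(u, v)} := diff_subset_diff_right (by simp)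
        have := ncard_le_ncard hsub (toFinite _)
        rw [ncard_diff_singleton_of_mem heN] at this
        omega)
  have hfuM₂ : s(u, w) ∉ M₂ := by
    intro h
    rcases (hMsub h).1 with h' | h'
    · exact h'.2 (Or.inl rfl)
    · exact disjoint_left.mp hdisj hfu h'.1
  have hfvM₂ : s(v, x) ∉ M₂ := by
    intro h
    rcases (hMsub h).1 with h' | h'
    · exact h'.2 (Or.inr rfl)
    · exact disjoint_left.mp hdisj hfv h'.1
  have hfvi : s(u, w) ∉ insert (s(v, x)) M₂ := by
    intro h
    rcases h with h | h
    · exact hfufv h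
    · exact hfuM₂ h
  refine ⟨insert (s(u, w)) (insert (s(v, x)) M₂), ?_, ?_, ?_⟩
  · intro a ha
    rcases ha with rfl | rfl | ha
    · exact ⟨Or.inl hfu, hfuF'⟩
    · exact ⟨Or.inl hfv, hfvF'⟩
    · obtain ⟨h1, h2⟩ := hMsub ha
      exact ⟨h1.imp (fun h => h.1) (fun h => h.1), h2⟩
  · have hins : PW (insert (s(v, x)) M₂) := by
      refine hMPW.insert' ?_
      intro d hd hne z hzg hzd
      obtain ⟨hd', hdF'⟩ := hMsub hd
      rcases Sym2.mem_iff.mp hzg with rfl | rfl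
      · rcases hd' with h | h
        · exact h.2 (Or.inr (hF.eq_of_mem h.1 hfv hzd (Sym2.mem_mk_left z x)))
        · exact h.2 (Or.inl (hN.eq_of_mem h.1 heN hzd (Sym2.mem_mk_right u z)))
      · rcases hd' with h | h
        · exact h.2 (Or.inr (hF.eq_of_mem h.1 hfv hzd (Sym2.mem_mk_right v z)))
        · exact h.2 (Or.inr (Or.inr (hN.eq_of_mem h.1 he₃N hzd hxe₃)))
    refine hins.insert' ?_
    intro d hd hne z hzg hzd
    rcases hd with rfl | hd
    · exact hF (s(u, w)) hfu (s(v, x)) hfv hfufv z ⟨hzg, hzd⟩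
    · obtain ⟨hd', hdF'⟩ := hMsub hd
      rcases Sym2.mem_iff.mp hzg with rfl | rfl
      · rcases hd' with h | h
        · exact h.2 (Or.inl (hF.eq_of_mem h.1 hfu hzd (Sym2.mem_mk_left z w)))
        · exact h.2 (Or.inl (hN.eq_of_mem h.1 heN hzd (Sym2.mem_mk_left z v)))
      · rcases hd' with h | h
        · exact h.2 (Or.inl (hF.eq_of_mem h.1 hfu hzd (Sym2.mem_mk_right u z)))
        · exact h.2 (Or.inr (Or.inl (hN.eq_of_mem h.1 he₂N hzd hwe₂)))
  · -- counting
    have hBsub : Bad F₂ N₂ F' ⊆ Bad F N F' := by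
      rintro ⟨d, z⟩ ⟨hdN₂, hdF', hzd, hcov⟩
      refine ⟨hdN₂.1, hdF', hzd, ?_⟩
      intro f hfF hzf
      by_cases hffu : f = s(u, w)
      · subst hffu
        rcases Sym2.mem_iff.mp hzf with rfl | rfl
        · exact hdN₂.2 (Or.inl (hN.eq_of_mem hdN₂.1 heN hzd (Sym2.mem_mk_left z v)))
        · exact hdN₂.2 (Or.inr (Or.inl (hN.eq_of_mem hdN₂.1 he₂N hzd hwe₂)))
      · by_cases hffv : f = s(v, x)
        · subst hffv
          rcases Sym2.mem_iff.mp hzf with rfl | rfl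
          · exact hdN₂.2 (Or.inl (hN.eq_of_mem hdN₂.1 heN hzd (Sym2.mem_mk_right u z)))
          · exact hdN₂.2 (Or.inr (Or.inr (hN.eq_of_mem hdN₂.1 he₃N hzd hxe₃)))
        · exact hcov f ⟨hfF, by simp [hffu, hffv]⟩ hzf
    have hBcard : (Bad F₂ N₂ F').ncard ≤ (Bad F N F').ncard :=
      ncard_le_ncard hBsub (toFinite _)
    have hNle : N.ncard ≤ N₂.ncard + 3 := by
      have h6 : N.ncard ≤ N₂.ncard + ({s(u, v), e₂, e₃} : Set (Sym2 V)).ncard :=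
        ncard_le_diff_add N {s(u, v), e₂, e₃}
      have a1 := ncard_insert_le (s(u, v)) ({e₂, e₃} : Set (Sym2 V))
      have a2 := ncard_insert_le e₂ ({e₃} : Set (Sym2 V))
      have a3 : ({e₃} : Set (Sym2 V)).ncard = 1 := ncard_singleton _
      omega
    rw [ncard_insert_of_notMem hfvi, ncard_insert_of_notMem hfvM₂]
    omega

lemma stepAnohit (ih : IH V n) (hF : PW F) (hN : PW N) (hF' : PW F')
    (ndF : ∀ e ∈ F, ¬ e.IsDiag) (ndN : ∀ e ∈ N, ¬ e.IsDiag) (hdisj : Disjoint F N)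
    (hcard : N.ncard ≤ n + 1) (heN : s(u, v) ∈ N) (heF' : s(u, v) ∉ F')
    (hnohit : ¬ ∃ f ∈ F, u ∈ f ∧ ∃ d ∈ N, d ∈ F' ∧ ∃ z, z ∈ d ∧ z ∈ f) :
    Goal F N F' := by
  have heNF : s(u, v) ∉ F := disjoint_right.mp hdisj heN
  set N₂ : Set (Sym2 V) := N \ {s(u, v)} with hN₂
  set F₂ : Set (Sym2 V) := {f ∈ F | u ∉ f ∧ v ∉ f} with hF₂
  obtain ⟨M₂, hMsub, hMPW, hMcount⟩ :=
    ih F₂ N₂ F' (hF.mono (sep_subset _ _)) (hN.mono diff_subset) hF'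
      (fun e he => ndF e he.1) (fun e he => ndN e he.1)
      ((hdisj.mono_left (sep_subset _ _)).mono_right diff_subset)
      (by rw [hN₂, ncard_diff_singleton_of_mem heN]; omega)
  have heM₂ : s(u, v) ∉ M₂ := by
    intro h
    rcases (hMsub h).1 with h' | h'
    · exact h'.2.1 (Sym2.mem_mk_left u v)
    · exact h'.2 rfl
  refine ⟨insert (s(u, v)) M₂, ?_, ?_, ?_⟩
  · intro a ha
    rcases ha with rfl | ha
    · exact ⟨Or.inr heN, heF'⟩
    · obtain ⟨h1, h2⟩ := hMsub ha
      exact ⟨h1.imp (fun h => h.1) (fun h => h.1), h2⟩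
  · refine hMPW.insert' ?_
    intro d hd hne z hzg hzd
    obtain ⟨hd', hdF'⟩ := hMsub hd
    rcases Sym2.mem_iff.mp hzg with rfl | rfl
    · rcases hd' with h | h
      · exact h.2.1 hzd
      · exact h.2 (hN.eq_of_mem h.1 heN hzd (Sym2.mem_mk_left z v))
    · rcases hd' with h | h
      · exact h.2.2 hzd
      · exact h.2 (hN.eq_of_mem h.1 heN hzd (Sym2.mem_mk_right u z))
  · -- counting
    set T : Set (Sym2 V × V) :=
      {p | p.1 ∈ N ∧ p.2 ∈ p.1 ∧ ∃ f ∈ F, v ∈ f ∧ p.2 ∈ f ∧ p.2 ≠ v} with hT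
    have hTcard : T.ncard ≤ 1 := by
      rw [ncard_le_one (toFinite _)]
      rintro ⟨d, z⟩ ⟨hd, hzd, f, hfF, hvf, hzf, hzv⟩ ⟨d', z'⟩ ⟨hd', hzd', f', hfF', hvf', hzf', hzv'⟩
      have hff : f = f' := hF.eq_of_mem hfF hfF' hvf hvf'
      subst hff
      obtain ⟨y, rfl⟩ := other_repr hvf
      have hzy : z = y := (Sym2.mem_iff.mp hzf).resolve_left hzv
      have hzy' : z' = y := (Sym2.mem_iff.mp hzf').resolve_left hzv'
      subst hzy; subst hzy'
      have : d = d' := hN.eq_of_mem hd hd' hzd hzd'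
      simp [this]
    have hBsub : Bad F₂ N₂ F' ⊆ Bad F N F' ∪ T := by
      rintro ⟨d, z⟩ ⟨hdN₂, hdF', hzd, hcov⟩
      by_cases hall : ∀ f ∈ F, z ∉ f
      · exact Or.inl ⟨hdN₂.1, hdF', hzd, hall⟩
      · push_neg at hall
        obtain ⟨f, hfF, hzf⟩ := hall
        have hf2 : u ∈ f ∨ v ∈ f := by
          by_contra hc
          push_neg at hc
          exact hcov f ⟨hfF, hc.1, hc.2⟩ hzf
        rcases hf2 with hf2 | hf2
        · exact absurd ⟨f, hfF, hf2, d, hdN₂.1, hdF', z, hzd, hzf⟩ hnohit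
        · refine Or.inr ⟨hdN₂.1, hzd, f, hfF, hf2, hzf, ?_⟩
          rintro rfl
          exact heF' (hN.eq_of_mem hdN₂.1 heN hzd (Sym2.mem_mk_right u z) ▸ hdF')
    have hBcard : (Bad F₂ N₂ F').ncard ≤ (Bad F N F').ncard + 1 := by
      calc (Bad F₂ N₂ F').ncard ≤ (Bad F N F' ∪ T).ncard :=
            ncard_le_ncard hBsub (toFinite _)
        _ ≤ (Bad F N F').ncard + T.ncard := ncard_union_le _ _
        _ ≤ (Bad F N F').ncard + 1 := by omega
    have hN₂card : N₂.ncard = N.ncard - 1 := ncard_diff_singleton_of_mem heN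
    have hNpos : 0 < N.ncard := (ncard_pos (toFinite _)).mpr ⟨_, heN⟩
    rw [ncard_insert_of_notMem heM₂]
    omega

lemma stepAboth (ih : IH V n) (hF : PW F) (hN : PW N) (hF' : PW F')
    (ndF : ∀ e ∈ F, ¬ e.IsDiag) (ndN : ∀ e ∈ N, ¬ e.IsDiag) (hdisj : Disjoint F N)
    (hcard : N.ncard ≤ n + 1) (heN : s(u, v) ∈ N) (heF' : s(u, v) ∉ F')
    (hfu : s(u, w) ∈ F) (hfv : s(v, x) ∈ F)
    {e₂ e₃ : Sym2 V} (he₂N : e₂ ∈ N) (he₂F' : e₂ ∈ F') (hwe₂ : w ∈ e₂)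
    (he₃N : e₃ ∈ N) (he₃F' : e₃ ∈ F') (hxe₃ : x ∈ e₃) : Goal F N F' := by
  have heNF : s(u, v) ∉ F := disjoint_right.mp hdisj heN
  have huv : u ≠ v := by simpa using ndN _ heN
  have huw : u ≠ w := by simpa using ndF _ hfu
  have hvx : v ≠ x := by simpa using ndF _ hfv
  have hwv : w ≠ v := by rintro rfl; exact heNF hfu
  have hxu : x ≠ u := by
    rintro rfl
    exact heNF (Sym2.eq_swap ▸ hfv)
  have hfufv : s(u, w) ≠ s(v, x) := by
    intro h
    have hv : v ∈ s(u, w) := h ▸ Sym2.mem_mk_left v x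
    rcases Sym2.mem_iff.mp hv with rfl | rfl
    · exact huv rfl
    · exact hwv rfl
  have hfue₂ : s(u, w) ≠ e₂ := fun h => disjoint_left.mp hdisj hfu (h ▸ he₂N)
  have hfve₃ : s(v, x) ≠ e₃ := fun h => disjoint_left.mp hdisj hfv (h ▸ he₃N)
  have hfuF' : s(u, w) ∉ F' := by
    intro h
    exact hfue₂ (hF'.eq_of_mem h he₂F' (Sym2.mem_mk_right u w) hwe₂)
  have hfvF' : s(v, x) ∉ F' := by
    intro h
    exact hfve₃ (hF'.eq_of_mem h he₃F' (Sym2.mem_mk_right v x) hxe₃)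
  set N₂ : Set (Sym2 V) := N \ {s(u, v)} with hN₂
  set F₂ : Set (Sym2 V) := F \ {s(u, w), s(v, x)} with hF₂
  obtain ⟨M₂, hMsub, hMPW, hMcount⟩ :=
    ih F₂ N₂ F' (hF.mono diff_subset) (hN.mono diff_subset) hF'
      (fun e he => ndF e he.1) (fun e he => ndN e he.1)
      ((hdisj.mono_left diff_subset).mono_right diff_subset)
      (by rw [hN₂, ncard_diff_singleton_of_mem heN]; omega)
  have hfuM₂ : s(u, w) ∉ M₂ := by
    intro h
    rcases (hMsub h).1 with h' | h'
    · exact h'.2 (Or.inl rfl)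
    · exact disjoint_left.mp hdisj hfu h'.1
  have hfvM₂ : s(v, x) ∉ M₂ := by
    intro h
    rcases (hMsub h).1 with h' | h'
    · exact h'.2 (Or.inr rfl)
    · exact disjoint_left.mp hdisj hfv h'.1
  have hfvi : s(u, w) ∉ insert (s(v, x)) M₂ := by
    intro h
    rcases h with h | h
    · exact hfufv h
    · exact hfuM₂ h
  refine ⟨insert (s(u, w)) (insert (s(v, x)) M₂), ?_, ?_, ?_⟩
  · intro a ha
    rcases ha with rfl | rfl | ha
    · exact ⟨Or.inl hfu, hfuF'⟩
    · exact ⟨Or.inl hfv, hfvF'⟩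
    · obtain ⟨h1, h2⟩ := hMsub ha
      exact ⟨h1.imp (fun h => h.1) (fun h => h.1), h2⟩
  · have hins : PW (insert (s(v, x)) M₂) := by
      refine hMPW.insert' ?_
      intro d hd hne z hzg hzd
      obtain ⟨hd', hdF'⟩ := hMsub hd
      rcases Sym2.mem_iff.mp hzg with rfl | rfl
      · rcases hd' with h | h
        · exact h.2 (Or.inr (hF.eq_of_mem h.1 hfv hzd (Sym2.mem_mk_left z x)))
        · exact h.2 (hN.eq_of_mem h.1 heN hzd (Sym2.mem_mk_right u z))
      · rcases hd' with h | h
        · exact h.2 (Or.inr (hF.eq_of_mem h.1 hfv hzd (Sym2.mem_mk_right v z)))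
        · exact hdF' ((hN.eq_of_mem h.1 he₃N hzd hxe₃) ▸ he₃F')
    refine hins.insert' ?_
    intro d hd hne z hzg hzd
    rcases hd with rfl | hd
    · exact hF (s(u, w)) hfu (s(v, x)) hfv hfufv z ⟨hzg, hzd⟩
    · obtain ⟨hd', hdF'⟩ := hMsub hd
      rcases Sym2.mem_iff.mp hzg with rfl | rfl
      · rcases hd' with h | h
        · exact h.2 (Or.inl (hF.eq_of_mem h.1 hfu hzd (Sym2.mem_mk_left z w)))
        · exact h.2 (hN.eq_of_mem h.1 heN hzd (Sym2.mem_mk_left z v))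
      · rcases hd' with h | h
        · exact h.2 (Or.inl (hF.eq_of_mem h.1 hfu hzd (Sym2.mem_mk_right u z)))
        · exact hdF' ((hN.eq_of_mem h.1 he₂N hzd hwe₂) ▸ he₂F')
  · -- counting
    have hBsub : Bad F₂ N₂ F' ⊆ Bad F N F' ∪ {(e₂, w), (e₃, x)} := by
      rintro ⟨d, z⟩ ⟨hdN₂, hdF', hzd, hcov⟩
      by_cases hall : ∀ f ∈ F, z ∉ f
      · exact Or.inl ⟨hdN₂.1, hdF', hzd, hall⟩
      · push_neg at hall
        obtain ⟨f, hfF, hzf⟩ := hall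
        have hf2 : f = s(u, w) ∨ f = s(v, x) := by
          by_contra hc
          push_neg at hc
          exact hcov f ⟨hfF, by simp [hc.1, hc.2]⟩ hzf
        rcases hf2 with rfl | rfl
        · rcases Sym2.mem_iff.mp hzf with rfl | rfl
          · exact absurd (hN.eq_of_mem hdN₂.1 heN hzd (Sym2.mem_mk_left z v))
              (fun h => hdN₂.2 h)
          · have : d = e₂ := hN.eq_of_mem hdN₂.1 he₂N hzd hwe₂
            exact Or.inr (Or.inl (by simp [this]))
        · rcases Sym2.mem_iff.mp hzf with rfl | rfl
          · exact absurd (hN.eq_of_mem hdN₂.1 heN hzd (Sym2.mem_mk_right u z))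
              (fun h => hdN₂.2 h)
          · have : d = e₃ := hN.eq_of_mem hdN₂.1 he₃N hzd hxe₃
            exact Or.inr (Or.inr (by simp [this]))
    have hBcard : (Bad F₂ N₂ F').ncard ≤ (Bad F N F').ncard + 2 := by
      have a1 := ncard_insert_le ((e₂, w)) ({(e₃, x)} : Set (Sym2 V × V))
      have a3 : ({(e₃, x)} : Set (Sym2 V × V)).ncard = 1 := ncard_singleton _
      calc (Bad F₂ N₂ F').ncard
          ≤ (Bad F N F' ∪ {(e₂, w), (e₃, x)}).ncard := ncard_le_ncard hBsub (toFinite _)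
        _ ≤ (Bad F N F').ncard + ({(e₂, w), (e₃, x)} : Set (Sym2 V × V)).ncard :=
            ncard_union_le _ _
        _ ≤ (Bad F N F').ncard + 2 := by omega
    have hN₂card : N₂.ncard = N.ncard - 1 := ncard_diff_singleton_of_mem heN
    have hNpos : 0 < N.ncard := (ncard_pos (toFinite _)).mpr ⟨_, heN⟩
    rw [ncard_insert_of_notMem hfvi, ncard_insert_of_notMem hfvM₂]
    omega

end Steps

lemma core [Finite V] (n : ℕ) : IH V n := by
  induction n with
  | zero =>
    intro F N F' hF hN hF' ndF ndN hdisj hc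
    have hN0 : N.ncard = 0 := Nat.le_zero.mp hc
    exact ⟨∅, empty_subset _, fun e he => absurd he (notMem_empty e), by simp [hN0]⟩
  | succ n ih =>
    intro F N F' hF hN hF' ndF ndN hdisj hc
    rcases N.eq_empty_or_nonempty with rfl | ⟨e, heN⟩
    · exact ⟨∅, empty_subset _, fun e he => absurd he (notMem_empty e), by simp⟩
    · obtain ⟨u, v, rfl⟩ := sym2_repr e
      have heNs : s(v, u) ∈ N := by rw [Sym2.eq_swap]; exact heN
      by_cases heF' : s(u, v) ∈ F'
      · have heF's : s(v, u) ∈ F' := by rw [Sym2.eq_swap]; exact heF'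
        by_cases hcu : ∃ f ∈ F, u ∈ f
        · obtain ⟨fu, hfuF, hufu⟩ := hcu
          obtain ⟨w, rfl⟩ := other_repr hufu
          by_cases hgu : ∀ d ∈ N, w ∈ d → d ∈ F'
          · exact stepBgood ih hF hN hF' ndF ndN hdisj hc heN heF' hfuF hgu
          · push_neg at hgu
            obtain ⟨e₂, he₂N, hwe₂, he₂F'⟩ := hgu
            by_cases hcv : ∃ f ∈ F, v ∈ f
            · obtain ⟨fv, hfvF, hvfv⟩ := hcv
              obtain ⟨x, rfl⟩ := other_repr hvfv
              by_cases hgv : ∀ d ∈ N, x ∈ d → d ∈ F'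
              · exact stepBgood ih hF hN hF' ndF ndN hdisj hc heNs heF's hfvF hgv
              · push_neg at hgv
                obtain ⟨e₃, he₃N, hxe₃, he₃F'⟩ := hgv
                exact stepBboth ih hF hN hF' ndF ndN hdisj hc heN heF' hfuF hfvF
                  he₂N hwe₂ he₂F' he₃N hxe₃ he₃F'
            · push_neg at hcv
              exact stepB1bad ih hF hN hF' ndF ndN hdisj hc heN heF' hfuF
                he₂N hwe₂ he₂F' hcv
        · push_neg at hcu
          by_cases hcv : ∃ f ∈ F, v ∈ f
          · obtain ⟨fv, hfvF, hvfv⟩ := hcv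
            obtain ⟨x, rfl⟩ := other_repr hvfv
            by_cases hgv : ∀ d ∈ N, x ∈ d → d ∈ F'
            · exact stepBgood ih hF hN hF' ndF ndN hdisj hc heNs heF's hfvF hgv
            · push_neg at hgv
              obtain ⟨e₃, he₃N, hxe₃, he₃F'⟩ := hgv
              exact stepB1bad ih hF hN hF' ndF ndN hdisj hc heNs heF's hfvF
                he₃N hxe₃ he₃F' hcu
          · push_neg at hcv
            exact stepB0 ih hF hN hF' ndF ndN hdisj hc heN heF' hcu hcv
      · by_cases hhu : ∃ f ∈ F, u ∈ f ∧ ∃ d ∈ N, d ∈ F' ∧ ∃ z, z ∈ d ∧ z ∈ f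
        · by_cases hhv : ∃ f ∈ F, v ∈ f ∧ ∃ d ∈ N, d ∈ F' ∧ ∃ z, z ∈ d ∧ z ∈ f
          · obtain ⟨fu, hfuF, hufu, e₂, he₂N, he₂F', z, hze₂, hzfu⟩ := hhu
            obtain ⟨w, rfl⟩ := other_repr hufu
            have hwe₂ : w ∈ e₂ := by
              rcases Sym2.mem_iff.mp hzfu with rfl | rfl
              · have h1 : e₂ = s(z, v) := hN.eq_of_mem he₂N heN hze₂ (Sym2.mem_mk_left z v)
                rw [h1] at he₂F'
                exact absurd he₂F' heF'
              · exact hze₂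
            obtain ⟨fv, hfvF, hvfv, e₃, he₃N, he₃F', z', hze₃, hzfv⟩ := hhv
            obtain ⟨x, rfl⟩ := other_repr hvfv
            have hxe₃ : x ∈ e₃ := by
              rcases Sym2.mem_iff.mp hzfv with rfl | rfl
              · have h1 : e₃ = s(u, z') := hN.eq_of_mem he₃N heN hze₃ (Sym2.mem_mk_right u z')
                rw [h1] at he₃F'
                exact absurd he₃F' heF'
              · exact hze₃
            exact stepAboth ih hF hN hF' ndF ndN hdisj hc heN heF' hfuF hfvF
              he₂N he₂F' hwe₂ he₃N he₃F' hxe₃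
          · have heF's : s(v, u) ∉ F' := by rw [Sym2.eq_swap]; exact heF'
            exact stepAnohit ih hF hN hF' ndF ndN hdisj hc heNs heF's hhv
        · exact stepAnohit ih hF hN hF' ndF ndN hdisj hc heN heF' hhu


section Outer

variable [Fintype V]

lemma cover_ncard : ∀ n : ℕ, ∀ F : Set (Sym2 V), PW F → (∀ e ∈ F, ¬ e.IsDiag) →
    F.ncard = n → {y | ∃ e ∈ F, y ∈ e}.ncard = 2 * n := by
  intro n
  induction n with
  | zero =>
    intro F _ _ h
    have hF : F = ∅ := (ncard_eq_zero (toFinite _)).mp h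
    subst hF
    have : {y : V | ∃ e ∈ (∅ : Set (Sym2 V)), y ∈ e} = ∅ := by simp
    rw [this]
    simp
  | succ n ih =>
    intro F hPW hnd hcard
    have hne : F.Nonempty := by
      rw [← ncard_pos (toFinite _)]
      omega
    obtain ⟨e, heF⟩ := hne
    obtain ⟨u, v, rfl⟩ := sym2_repr e
    have huv : u ≠ v := by simpa using hnd _ heF
    set F₂ : Set (Sym2 V) := F \ {s(u, v)} with hF₂
    have hcov : {y | ∃ e ∈ F, y ∈ e} = {y | ∃ e ∈ F₂, y ∈ e} ∪ {u, v} := by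
      ext y
      simp only [mem_setOf_eq, mem_union, mem_insert_iff, mem_singleton_iff]
      constructor
      · rintro ⟨f, hf, hyf⟩
        by_cases hfe : f = s(u, v)
        · subst hfe
          exact Or.inr (Sym2.mem_iff.mp hyf)
        · exact Or.inl ⟨f, ⟨hf, hfe⟩, hyf⟩
      · rintro (⟨f, hf, hyf⟩ | h)
        · exact ⟨f, hf.1, hyf⟩
        · rcases h with rfl | rfl
          · exact ⟨s(y, v), heF, Sym2.mem_mk_left y v⟩
          · exact ⟨s(u, y), heF, Sym2.mem_mk_right u y⟩
    have hdisj : Disjoint {y | ∃ e ∈ F₂, y ∈ e} ({u, v} : Set V) := by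
      rw [disjoint_left]
      rintro y ⟨f, hf, hyf⟩ hy
      have hye : y ∈ s(u, v) := by
        rcases hy with rfl | rfl
        · exact Sym2.mem_mk_left y v
        · exact Sym2.mem_mk_right u y
      exact hf.2 (hPW.eq_of_mem hf.1 heF hyf hye)
    have hF₂card : F₂.ncard = n := by
      have h9 : F₂.ncard = F.ncard - 1 := ncard_diff_singleton_of_mem heF
      omega
    rw [hcov, ncard_union_eq hdisj (toFinite _) (toFinite _),
      ih F₂ (hPW.mono diff_subset) (fun e he => hnd e he.1) hF₂card, ncard_pair huv]
    ring

variable (G : SimpleGraph V)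

lemma matchingSet_zero_mem :
    0 ∈ {n | ∃ F : Set (Sym2 V), IsMatchingSet G F ∧ F.ncard = n} :=
  ⟨∅, ⟨empty_subset _, fun e he => absurd he (notMem_empty e)⟩, ncard_empty _⟩

lemma matchingSet_bdd :
    BddAbove {n | ∃ F : Set (Sym2 V), IsMatchingSet G F ∧ F.ncard = n} := by
  refine ⟨Nat.card (Sym2 V), ?_⟩
  rintro n ⟨F, _, rfl⟩
  calc F.ncard ≤ (univ : Set (Sym2 V)).ncard := ncard_le_ncard (subset_univ F) (toFinite _)
    _ = Nat.card (Sym2 V) := ncard_univ _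

lemma exists_maximum : ∃ F, IsMaximumMatching G F := by
  have h := Nat.sSup_mem ⟨0, matchingSet_zero_mem G⟩ (matchingSet_bdd G)
  obtain ⟨F, hF, hc⟩ := h
  exact ⟨F, hF, hc⟩

lemma le_matchingNumber {F : Set (Sym2 V)} (hF : IsMatchingSet G F) :
    F.ncard ≤ matchingNumber G :=
  le_csSup (matchingSet_bdd G) ⟨F, hF, rfl⟩

lemma matchingNumber_le_bound : matchingNumber G ≤ Nat.card (Sym2 V) := by
  apply csSup_le ⟨0, matchingSet_zero_mem G⟩
  rintro n ⟨F, _, rfl⟩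
  calc F.ncard ≤ (univ : Set (Sym2 V)).ncard := ncard_le_ncard (subset_univ F) (toFinite _)
    _ = Nat.card (Sym2 V) := ncard_univ _

lemma matching_nd {F : Set (Sym2 V)} (hF : IsMatchingSet G F) : ∀ e ∈ F, ¬ e.IsDiag :=
  fun e he => G.not_isDiag_of_mem_edgeSet (hF.1 he)

lemma matching_le_perfect {F P : Set (Sym2 V)} (hF : IsMatchingSet G F)
    (hP : IsPerfectMatchingSet G P) : F.ncard ≤ P.ncard := by
  have hcF := cover_ncard F.ncard F hF.2 (matching_nd G hF) rfl
  have hcP := cover_ncard P.ncard P hP.1.2 (matching_nd G hP.1) rfl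
  have hPuniv : {y | ∃ e ∈ P, y ∈ e} = univ :=
    eq_univ_of_forall (fun y => hP.2 y)
  have h1 : {y | ∃ e ∈ F, y ∈ e}.ncard ≤ (univ : Set V).ncard :=
    ncard_le_ncard (subset_univ _) (toFinite _)
  rw [hcF] at h1
  have h2 : (univ : Set V).ncard = 2 * P.ncard := by rw [← hPuniv]; exact hcP
  omega

lemma maximum_isPerfect {F P : Set (Sym2 V)} (hP : IsPerfectMatchingSet G P)
    (hF : IsMaximumMatching G F) : IsPerfectMatchingSet G F := by
  have h1 : P.ncard ≤ F.ncard := hF.2 ▸ le_matchingNumber G hP.1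
  have h2 : F.ncard ≤ P.ncard := matching_le_perfect G hF.1 hP
  have hcF := cover_ncard F.ncard F hF.1.2 (matching_nd G hF.1) rfl
  have hcP := cover_ncard P.ncard P hP.1.2 (matching_nd G hP.1) rfl
  have hPuniv : {y | ∃ e ∈ P, y ∈ e} = univ := eq_univ_of_forall (fun y => hP.2 y)
  have hcovuniv : {y | ∃ e ∈ F, y ∈ e} = univ := by
    apply eq_of_subset_of_ncard_le (subset_univ _) _ (toFinite _)
    rw [hcF, ← hPuniv, hcP]
    omega
  refine ⟨hF.1, fun y => ?_⟩
  have : y ∈ {y | ∃ e ∈ F, y ∈ e} := hcovuniv ▸ mem_univ y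
  exact this

end Outer

end TwoLThreeEll

open TwoLThreeEll Set in
theorem two_LNum_le_three_ellNum_of_perfectMatching {V : Type*} [Fintype V]
    (G : SimpleGraph V) (h : ∃ F, IsPerfectMatchingSet G F) :
    2 * LNum G ≤ 3 * ellNum G := by
  obtain ⟨P, hP⟩ := h
  have hSne : {n | ∃ F, IsMaximumMatching G F ∧ matchingNumber (G.deleteEdges F) = n}.Nonempty := by
    obtain ⟨F, hF⟩ := exists_maximum G
    exact ⟨_, F, hF, rfl⟩
  have hSbdd : BddAbove {n | ∃ F, IsMaximumMatching G F ∧ matchingNumber (G.deleteEdges F) = n} := by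
    refine ⟨Nat.card (Sym2 V), ?_⟩
    rintro n ⟨F, _, rfl⟩
    exact matchingNumber_le_bound _
  have hL : LNum G ∈ {n | ∃ F, IsMaximumMatching G F ∧ matchingNumber (G.deleteEdges F) = n} :=
    Nat.sSup_mem hSne hSbdd
  have hl : ellNum G ∈ {n | ∃ F, IsMaximumMatching G F ∧ matchingNumber (G.deleteEdges F) = n} :=
    Nat.sInf_mem hSne
  obtain ⟨FL, hFL, hFLnum⟩ := hL
  obtain ⟨Fl, hFl, hFlnum⟩ := hl
  have hFLperf : IsPerfectMatchingSet G FL := maximum_isPerfect G hP hFL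
  obtain ⟨N, hNmatch, hNcard⟩ := exists_maximum (G.deleteEdges FL)
  have hNedge : N ⊆ G.edgeSet \ FL := by
    rw [← G.edgeSet_deleteEdges FL]
    exact hNmatch.1
  have hdisj : Disjoint FL N := by
    rw [disjoint_right]
    intro a haN haFL
    exact (hNedge haN).2 haFL
  have hcore := core N.ncard FL N Fl hFL.1.2 hNmatch.2 hFl.1.2
    (fun e he => G.not_isDiag_of_mem_edgeSet (hFL.1.1 he))
    (fun e he => G.not_isDiag_of_mem_edgeSet (hNedge he).1)
    hdisj le_rfl
  obtain ⟨M, hMsub, hMPW, hMcount⟩ := hcore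
  have hBad : Bad FL N Fl = ∅ := by
    rw [eq_empty_iff_forall_notMem]
    rintro ⟨d, z⟩ ⟨_, _, _, hcov⟩
    obtain ⟨e, heFL, hze⟩ := hFLperf.2 z
    exact hcov e heFL hze
  rw [hBad, ncard_empty] at hMcount
  have hMmatch : IsMatchingSet (G.deleteEdges Fl) M := by
    constructor
    · rw [G.edgeSet_deleteEdges]
      intro a ha
      obtain ⟨h1, h2⟩ := hMsub ha
      refine ⟨?_, h2⟩
      rcases h1 with h1 | h1
      · exact hFL.1.1 h1
      · exact (hNedge h1).1
    · exact hMPW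
  have hMle : M.ncard ≤ ellNum G := by
    rw [← hFlnum]
    exact le_matchingNumber _ hMmatch
  have hNL : N.ncard = LNum G := by rw [← hFLnum, ← hNcard]
  omega
end

section
/- There exists a finite simple graph G with a unique perfect matching M and a unique maximum 2-edge-colorable subgraph H such that M is not contained in the edge set of H. Concretely, the 'double spider' graph on 9 vertices consisting of two adjacent degree-3 vertices a, b, with two pendant paths of length 2 attached to each of a and b, has this property: its unique perfect matching contains the edge ab, while its unique maximum 2-edge-colorable subgraph consists of all 8 edges except ab. -/
/-- The "double spider": vertices 0 = a, 1 = b, paths a–2–3, a–4–5, b–6–7, b–8–9,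
plus the edge ab. -/
def doubleSpider : SimpleGraph (Fin 10) :=
  SimpleGraph.fromEdgeSet
    {s(0, 1), s(0, 2), s(2, 3), s(0, 4), s(4, 5), s(1, 6), s(6, 7), s(1, 8), s(8, 9)}

set_option maxRecDepth 40000

def E9 : Finset (Sym2 (Fin 10)) :=
  {s(0,1), s(0,2), s(2,3), s(0,4), s(4,5), s(1,6), s(6,7), s(1,8), s(8,9)}

lemma edgeSet_eq : doubleSpider.edgeSet = ↑E9 := by
  rw [doubleSpider, SimpleGraph.edgeSet_fromEdgeSet]
  ext e
  simp only [Set.mem_diff, Set.mem_insert_iff, Set.mem_singleton_iff, Set.mem_setOf_eq,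
    Finset.mem_coe]
  revert e
  decide

lemma edgeSet_finite : doubleSpider.edgeSet.Finite := by
  rw [edgeSet_eq]; exact E9.finite_toSet

lemma edgeSet_ncard : doubleSpider.edgeSet.ncard = 9 := by
  rw [edgeSet_eq, Set.ncard_coe_finset]; decide

lemma memE9 {e : Sym2 (Fin 10)} (h : e ∈ doubleSpider.edgeSet) : e ∈ E9 := by
  rw [edgeSet_eq] at h; exact h

lemma mem_cases : ∀ e ∈ E9, e = s(0,1) ∨ e = s(0,2) ∨ e = s(2,3) ∨ e = s(0,4) ∨ e = s(4,5) ∨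
    e = s(1,6) ∨ e = s(6,7) ∨ e = s(1,8) ∨ e = s(8,9) := by decide

lemma mem_edgeSet_of : ∀ e ∈ E9, e ∈ doubleSpider.edgeSet := by
  intro e he; rw [edgeSet_eq]; exact he

lemma pigeon {f : Fin 2 → Set (Sym2 (Fin 10))}
    (hm : ∀ i, IsMatchingSet doubleSpider (f i))
    {e1 e2 e3 : Sym2 (Fin 10)} (w : Fin 10)
    (h1 : e1 ∈ ⋃ i, f i) (h2 : e2 ∈ ⋃ i, f i) (h3 : e3 ∈ ⋃ i, f i)
    (d12 : e1 ≠ e2) (d13 : e1 ≠ e3) (d23 : e2 ≠ e3)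
    (w1 : w ∈ e1) (w2 : w ∈ e2) (w3 : w ∈ e3) : False := by
  simp only [Set.mem_iUnion] at h1 h2 h3
  obtain ⟨i1, h1⟩ := h1; obtain ⟨i2, h2⟩ := h2; obtain ⟨i3, h3⟩ := h3
  have tri : ∀ a b c : Fin 2, a = b ∨ a = c ∨ b = c := by decide
  rcases tri i1 i2 i3 with rfl | rfl | rfl
  · exact (hm i1).2 e1 h1 e2 h2 d12 w ⟨w1, w2⟩
  · exact (hm i1).2 e1 h1 e3 h3 d13 w ⟨w1, w3⟩
  · exact (hm i2).2 e2 h2 e3 h3 d23 w ⟨w2, w3⟩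

lemma union_sub {f : Fin 2 → Set (Sym2 (Fin 10))}
    (hm : ∀ i, IsMatchingSet doubleSpider (f i)) : (⋃ i, f i) ⊆ doubleSpider.edgeSet :=
  Set.iUnion_subset fun i => (hm i).1

lemma union_ncard_le_8 {f : Fin 2 → Set (Sym2 (Fin 10))}
    (hm : ∀ i, IsMatchingSet doubleSpider (f i)) : (⋃ i, f i).ncard ≤ 8 := by
  by_contra h
  push_neg at h
  have hsub := union_sub hm
  have h9 : (⋃ i, f i).ncard ≤ 9 := by
    have := Set.ncard_le_ncard hsub edgeSet_finite
    rwa [edgeSet_ncard] at this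
  have heq : (⋃ i, f i) = doubleSpider.edgeSet :=
    Set.eq_of_subset_of_ncard_le hsub (by rw [edgeSet_ncard]; omega) edgeSet_finite
  have hmem : ∀ e ∈ E9, e ∈ ⋃ i, f i := fun e he => heq ▸ mem_edgeSet_of e he
  exact pigeon hm 0 (hmem s(0,1) (by decide)) (hmem s(0,2) (by decide)) (hmem s(0,4) (by decide))
    (by decide) (by decide) (by decide) (by decide) (by decide) (by decide)

lemma union_eq_of_ncard_eq_8 {f : Fin 2 → Set (Sym2 (Fin 10))}
    (hm : ∀ i, IsMatchingSet doubleSpider (f i)) (h8 : (⋃ i, f i).ncard = 8) :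
    (⋃ i, f i) = doubleSpider.edgeSet \ {s(0, 1)} := by
  have hsub := union_sub hm
  have hfin : (⋃ i, f i).Finite := edgeSet_finite.subset hsub
  -- there is a missing edge
  have hmiss : ∃ x ∈ doubleSpider.edgeSet, x ∉ ⋃ i, f i := by
    by_contra h
    push_neg at h
    have heq : (⋃ i, f i) = doubleSpider.edgeSet := Set.Subset.antisymm hsub h
    rw [heq, edgeSet_ncard] at h8
    omega
  obtain ⟨x, hxE, hxU⟩ := hmiss
  have hUsub : (⋃ i, f i) ⊆ doubleSpider.edgeSet \ {x} := by
    intro e he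
    refine ⟨hsub he, ?_⟩
    rintro rfl
    exact hxU he
  have hdcard : (doubleSpider.edgeSet \ {x}).ncard = 8 := by
    rw [Set.ncard_diff_singleton_of_mem hxE, edgeSet_ncard]
  have hUeq : (⋃ i, f i) = doubleSpider.edgeSet \ {x} :=
    Set.eq_of_subset_of_ncard_le hUsub (by rw [hdcard]; omega) (edgeSet_finite.diff)
  have hmem : ∀ e ∈ E9, e ≠ x → e ∈ ⋃ i, f i := by
    intro e he hne
    rw [hUeq]
    exact ⟨mem_edgeSet_of e he, hne⟩
  rcases mem_cases x (memE9 hxE) with rfl | rfl | rfl | rfl | rfl | rfl | rfl | rfl | rfl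
  · exact hUeq
  · exact (pigeon hm 1 (hmem s(0,1) (by decide) (by decide))
      (hmem s(1,6) (by decide) (by decide)) (hmem s(1,8) (by decide) (by decide))
      (by decide) (by decide) (by decide) (by decide) (by decide) (by decide)).elim
  · exact (pigeon hm 0 (hmem s(0,1) (by decide) (by decide))
      (hmem s(0,2) (by decide) (by decide)) (hmem s(0,4) (by decide) (by decide))
      (by decide) (by decide) (by decide) (by decide) (by decide) (by decide)).elim
  · exact (pigeon hm 1 (hmem s(0,1) (by decide) (by decide))
      (hmem s(1,6) (by decide) (by decide)) (hmem s(1,8) (by decide) (by decide))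
      (by decide) (by decide) (by decide) (by decide) (by decide) (by decide)).elim
  all_goals exact (pigeon hm 0 (hmem s(0,1) (by decide) (by decide))
      (hmem s(0,2) (by decide) (by decide)) (hmem s(0,4) (by decide) (by decide))
      (by decide) (by decide) (by decide) (by decide) (by decide) (by decide)).elim

def M0 : Set (Sym2 (Fin 10)) := {s(0, 1), s(2, 3), s(4, 5), s(6, 7), s(8, 9)}

lemma M0_pm : IsPerfectMatchingSet doubleSpider M0 := by
  refine ⟨⟨?_, ?_⟩, ?_⟩
  · intro e he
    simp only [M0, Set.mem_insert_iff, Set.mem_singleton_iff] at he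
    rw [edgeSet_eq]
    revert he
    revert e
    decide
  · simp only [M0, Set.mem_insert_iff, Set.mem_singleton_iff]
    decide
  · intro v
    simp only [M0, Set.mem_insert_iff, Set.mem_singleton_iff]
    revert v
    decide

lemma M0_unique (M : Set (Sym2 (Fin 10))) (hM : IsPerfectMatchingSet doubleSpider M) :
    M = M0 := by
  obtain ⟨⟨hsub, hmatch⟩, hcov⟩ := hM
  have h23 : s(2,3) ∈ M := by
    obtain ⟨e, he, h3⟩ := hcov 3
    rcases mem_cases e (memE9 (hsub he)) with rfl|rfl|rfl|rfl|rfl|rfl|rfl|rfl|rfl <;>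
      first | exact he | exact absurd h3 (by decide)
  have h45 : s(4,5) ∈ M := by
    obtain ⟨e, he, h3⟩ := hcov 5
    rcases mem_cases e (memE9 (hsub he)) with rfl|rfl|rfl|rfl|rfl|rfl|rfl|rfl|rfl <;>
      first | exact he | exact absurd h3 (by decide)
  have h67 : s(6,7) ∈ M := by
    obtain ⟨e, he, h3⟩ := hcov 7
    rcases mem_cases e (memE9 (hsub he)) with rfl|rfl|rfl|rfl|rfl|rfl|rfl|rfl|rfl <;>
      first | exact he | exact absurd h3 (by decide)
  have h89 : s(8,9) ∈ M := by
    obtain ⟨e, he, h3⟩ := hcov 9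
    rcases mem_cases e (memE9 (hsub he)) with rfl|rfl|rfl|rfl|rfl|rfl|rfl|rfl|rfl <;>
      first | exact he | exact absurd h3 (by decide)
  have h01 : s(0,1) ∈ M := by
    obtain ⟨e, he, h0⟩ := hcov 0
    rcases mem_cases e (memE9 (hsub he)) with rfl|rfl|rfl|rfl|rfl|rfl|rfl|rfl|rfl
    · exact he
    · exact absurd (⟨by decide, by decide⟩ : (2:Fin 10) ∈ s(0,2) ∧ (2:Fin 10) ∈ s(2,3))
        (hmatch _ he _ h23 (by decide) 2)
    all_goals first
      | exact absurd h0 (by decide)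
      | exact absurd (⟨by decide, by decide⟩ : (4:Fin 10) ∈ s(0,4) ∧ (4:Fin 10) ∈ s(4,5))
          (hmatch _ he _ h45 (by decide) 4)
  ext e
  constructor
  · intro he
    rcases mem_cases e (memE9 (hsub he)) with rfl|rfl|rfl|rfl|rfl|rfl|rfl|rfl|rfl
    · exact Set.mem_insert _ _
    · exact absurd (⟨by decide, by decide⟩ : (2:Fin 10) ∈ s(0,2) ∧ (2:Fin 10) ∈ s(2,3))
        (hmatch _ he _ h23 (by decide) 2)
    · simp [M0]
    · exact absurd (⟨by decide, by decide⟩ : (4:Fin 10) ∈ s(0,4) ∧ (4:Fin 10) ∈ s(4,5))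
        (hmatch _ he _ h45 (by decide) 4)
    · simp [M0]
    · exact absurd (⟨by decide, by decide⟩ : (6:Fin 10) ∈ s(1,6) ∧ (6:Fin 10) ∈ s(6,7))
        (hmatch _ he _ h67 (by decide) 6)
    · simp [M0]
    · exact absurd (⟨by decide, by decide⟩ : (8:Fin 10) ∈ s(1,8) ∧ (8:Fin 10) ∈ s(8,9))
        (hmatch _ he _ h89 (by decide) 8)
    · simp [M0]
  · intro he
    simp only [M0, Set.mem_insert_iff, Set.mem_singleton_iff] at he
    rcases he with rfl|rfl|rfl|rfl|rfl
    exacts [h01, h23, h45, h67, h89]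

def A0 : Set (Sym2 (Fin 10)) := {s(0,2), s(4,5), s(1,6), s(8,9)}
def A1 : Set (Sym2 (Fin 10)) := {s(2,3), s(0,4), s(6,7), s(1,8)}

def f0 : Fin 2 → Set (Sym2 (Fin 10)) := ![A0, A1]

lemma A0_matching : IsMatchingSet doubleSpider A0 := by
  constructor
  · intro e he
    simp only [A0, Set.mem_insert_iff, Set.mem_singleton_iff] at he
    rw [edgeSet_eq]
    revert he; revert e; decide
  · simp only [A0, Set.mem_insert_iff, Set.mem_singleton_iff]
    decide

lemma A1_matching : IsMatchingSet doubleSpider A1 := by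
  constructor
  · intro e he
    simp only [A1, Set.mem_insert_iff, Set.mem_singleton_iff] at he
    rw [edgeSet_eq]
    revert he; revert e; decide
  · simp only [A1, Set.mem_insert_iff, Set.mem_singleton_iff]
    decide

lemma f0_matching : ∀ i, IsMatchingSet doubleSpider (f0 i) := by
  intro i
  fin_cases i
  · exact A0_matching
  · exact A1_matching

lemma f0_union_ncard : (⋃ i, f0 i).ncard = 8 := by
  have h : (⋃ i, f0 i) = ↑(E9.erase s(0,1)) := by
    ext e
    simp only [Set.mem_iUnion, Fin.exists_fin_two, f0, Matrix.cons_val_zero,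
      Matrix.cons_val_one, Matrix.head_cons, A0, A1, Set.mem_insert_iff, Set.mem_singleton_iff,
      Finset.coe_erase, Set.mem_diff, Finset.mem_coe]
    revert e
    decide
  rw [h, Set.ncard_coe_finset]
  decide

theorem doubleSpider_unique_pm_and_nuTwo :
    (IsPerfectMatchingSet doubleSpider {s(0, 1), s(2, 3), s(4, 5), s(6, 7), s(8, 9)} ∧
      ∀ M : Set (Sym2 (Fin 10)), IsPerfectMatchingSet doubleSpider M →
        M = {s(0, 1), s(2, 3), s(4, 5), s(6, 7), s(8, 9)}) ∧
    nuK doubleSpider 2 = 8 ∧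
    ∀ f : Fin 2 → Set (Sym2 (Fin 10)),
      (∀ i, IsMatchingSet doubleSpider (f i)) → (⋃ i, f i).ncard = 8 →
        (⋃ i, f i) = doubleSpider.edgeSet \ {s(0, 1)} := by
  refine ⟨⟨M0_pm, M0_unique⟩, ?_, fun f hm h8 => union_eq_of_ncard_eq_8 hm h8⟩
  have hub : ∀ n ∈ {n | ∃ f : Fin 2 → Set (Sym2 (Fin 10)),
      (∀ i, IsMatchingSet doubleSpider (f i)) ∧ (⋃ i, f i).ncard = n}, n ≤ 8 := by
    rintro n ⟨f, hm, rfl⟩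
    exact union_ncard_le_8 hm
  have hmem8 : 8 ∈ {n | ∃ f : Fin 2 → Set (Sym2 (Fin 10)),
      (∀ i, IsMatchingSet doubleSpider (f i)) ∧ (⋃ i, f i).ncard = n} :=
    ⟨f0, f0_matching, f0_union_ncard⟩
  exact le_antisymm (csSup_le ⟨8, hmem8⟩ hub) (le_csSup ⟨8, hub⟩ hmem8)
end

section
/- For the 9-vertex graph G consisting of two adjacent degree-3 vertices each with two pendant paths of length 2 attached, one has ν(G) = 5, ν₂(G) = 8, and L(G) = 2. -/
set_option maxRecDepth 40000


/-! ### auxiliary development -/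

def pw (S : Finset (Sym2 (Fin 10))) : Prop :=
  ∀ e ∈ S, ∀ f ∈ S, e ≠ f → ∀ v : Fin 10, ¬(v ∈ e ∧ v ∈ f)

instance : DecidablePred pw := fun S => by unfold pw; infer_instance

def Eds : Finset (Sym2 (Fin 10)) :=
  {s(0, 1), s(0, 2), s(2, 3), s(0, 4), s(4, 5), s(1, 6), s(6, 7), s(1, 8), s(8, 9)}

def F5 : Finset (Sym2 (Fin 10)) := {s(0,1), s(2,3), s(4,5), s(6,7), s(8,9)}

lemma ds_adj : ∀ x y : Fin 10, doubleSpider.Adj x y ↔ s(x,y) ∈ Eds := by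
  simp only [doubleSpider, SimpleGraph.fromEdgeSet_adj, Set.mem_insert_iff,
    Set.mem_singleton_iff, Eds, Finset.mem_insert, Finset.mem_singleton]
  decide

lemma edgeSet_eq_s11 {G : SimpleGraph (Fin 10)} {E : Finset (Sym2 (Fin 10))}
    (hadj : ∀ x y, G.Adj x y ↔ s(x,y) ∈ E) : G.edgeSet = ↑E := by
  ext e
  induction e using Sym2.ind with
  | _ x y => rw [SimpleGraph.mem_edgeSet, hadj, Finset.mem_coe]

lemma isMatching_iff {G : SimpleGraph (Fin 10)} {E : Finset (Sym2 (Fin 10))}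
    (hadj : ∀ x y, G.Adj x y ↔ s(x,y) ∈ E) (F : Set (Sym2 (Fin 10))) :
    IsMatchingSet G F ↔ ∃ S : Finset (Sym2 (Fin 10)), ↑S = F ∧ S ⊆ E ∧ pw S := by
  constructor
  · rintro ⟨hsub, hpw⟩
    rw [edgeSet_eq_s11 hadj] at hsub
    have hfin : F.Finite := E.finite_toSet.subset hsub
    refine ⟨hfin.toFinset, hfin.coe_toFinset, ?_, ?_⟩
    · intro e he
      rw [Set.Finite.mem_toFinset] at he
      exact_mod_cast hsub he
    · intro e he f hf
      rw [Set.Finite.mem_toFinset] at he hf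
      exact hpw e he f hf
  · rintro ⟨S, rfl, hS, hpw⟩
    exact ⟨by rw [edgeSet_eq_s11 hadj]; exact_mod_cast hS, fun e he f hf => hpw e he f hf⟩

lemma matchingNumber_eq {G : SimpleGraph (Fin 10)} {E : Finset (Sym2 (Fin 10))}
    (hadj : ∀ x y, G.Adj x y ↔ s(x,y) ∈ E) {m : ℕ}
    (hwit : ∃ S : Finset (Sym2 (Fin 10)), S ⊆ E ∧ pw S ∧ S.card = m)
    (hbd : ∀ S : Finset (Sym2 (Fin 10)), S ⊆ E → pw S → S.card ≤ m) :
    matchingNumber G = m := by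
  obtain ⟨S, hSE, hSpw, hc⟩ := hwit
  have hmem : m ∈ {n | ∃ F : Set (Sym2 (Fin 10)), IsMatchingSet G F ∧ F.ncard = n} :=
    ⟨↑S, (isMatching_iff hadj _).2 ⟨S, rfl, hSE, hSpw⟩, by rw [Set.ncard_coe_finset, hc]⟩
  have hub : ∀ n ∈ {n | ∃ F : Set (Sym2 (Fin 10)), IsMatchingSet G F ∧ F.ncard = n}, n ≤ m := by
    rintro n ⟨F, hF, rfl⟩
    obtain ⟨T, rfl, hTE, hTpw⟩ := (isMatching_iff hadj F).1 hF
    rw [Set.ncard_coe_finset]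
    exact hbd T hTE hTpw
  exact le_antisymm (csSup_le ⟨m, hmem⟩ hub) (le_csSup ⟨m, hub⟩ hmem)

/-- vertices of an edge as a finset -/
def vs (e : Sym2 (Fin 10)) : Finset (Fin 10) := Finset.univ.filter (· ∈ e)

lemma card_vs : ∀ e ∈ Eds, (vs e).card = 2 := by decide

lemma two_mul_card_le {E : Finset (Sym2 (Fin 10))} (hE : ∀ e ∈ E, (vs e).card = 2)
    {S : Finset (Sym2 (Fin 10))} (hS : S ⊆ E) (hpw : pw S) :
    2 * S.card = (S.biUnion vs).card := by
  rw [Finset.card_biUnion]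
  · rw [Finset.sum_congr rfl (fun e he => hE e (hS he)), Finset.sum_const, smul_eq_mul,
      mul_comm]
  · intro e he f hf hne
    rw [Function.onFun, Finset.disjoint_left]
    intro v hv hv'
    rw [vs, Finset.mem_filter] at hv hv'
    exact hpw e he f hf hne v ⟨hv.2, hv'.2⟩

lemma card_le_five {S : Finset (Sym2 (Fin 10))} (hS : S ⊆ Eds) (hpw : pw S) :
    S.card ≤ 5 := by
  have h := two_mul_card_le card_vs hS hpw
  have h2 : (S.biUnion vs).card ≤ 10 := le_trans (Finset.card_le_card (Finset.subset_univ _))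
    (by simp)
  omega

lemma star_bound {S : Finset (Sym2 (Fin 10))} (hpw : pw S) (a : Fin 10)
    (T : Finset (Sym2 (Fin 10))) (hT : ∀ e ∈ T, a ∈ e) : (S ∩ T).card ≤ 1 := by
  rw [Finset.card_le_one]
  intro e he f hf
  rw [Finset.mem_inter] at he hf
  by_contra hne
  exact hpw e he.1 f hf.1 hne a ⟨hT e he.2, hT f hf.2⟩

lemma union_card_le_eight {S1 S2 : Finset (Sym2 (Fin 10))}
    (h1 : S1 ⊆ Eds) (h2 : S2 ⊆ Eds) (hp1 : pw S1) (hp2 : pw S2) :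
    (S1 ∪ S2).card ≤ 8 := by
  by_contra h
  push_neg at h
  have hsub : S1 ∪ S2 ⊆ Eds := Finset.union_subset h1 h2
  have hcardE : Eds.card = 9 := by decide
  have h9 : (S1 ∪ S2).card = 9 := le_antisymm (hcardE ▸ Finset.card_le_card hsub) h
  have heq : S1 ∪ S2 = Eds := Finset.eq_of_subset_of_card_le hsub (by omega)
  set T : Finset (Sym2 (Fin 10)) := {s(0,1), s(0,2), s(0,4)} with hTdef
  have hT0 : ∀ e ∈ T, (0 : Fin 10) ∈ e := by decide
  have hTE : T ⊆ Eds := by decide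
  have : ((S1 ∪ S2) ∩ T).card ≤ 2 := by
    rw [Finset.union_inter_distrib_right]
    calc (S1 ∩ T ∪ S2 ∩ T).card ≤ (S1 ∩ T).card + (S2 ∩ T).card := Finset.card_union_le _ _
    _ ≤ 2 := by
        have := star_bound hp1 0 T hT0
        have := star_bound hp2 0 T hT0
        omega
  rw [heq, Finset.inter_eq_right.2 hTE] at this
  have : T.card = 3 := by decide
  omega

lemma matching_five_unique {S : Finset (Sym2 (Fin 10))} (hS : S ⊆ Eds) (hpw : pw S)
    (hc : S.card = 5) : S = F5 := by
  -- every vertex is covered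
  have h := two_mul_card_le card_vs hS hpw
  rw [hc] at h
  have huniv : S.biUnion vs = Finset.univ := Finset.eq_univ_of_card _ (by simp [← h])
  have hcover : ∀ v : Fin 10, ∃ e ∈ S, v ∈ e := by
    intro v
    have : v ∈ S.biUnion vs := huniv ▸ Finset.mem_univ v
    rw [Finset.mem_biUnion] at this
    obtain ⟨e, he, hv⟩ := this
    rw [vs, Finset.mem_filter] at hv
    exact ⟨e, he, hv.2⟩
  have leaf : ∀ (v : Fin 10) (e₀ : Sym2 (Fin 10)),
      (∀ e ∈ Eds, v ∈ e → e = e₀) → e₀ ∈ S := by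
    intro v e₀ huniq
    obtain ⟨e, he, hv⟩ := hcover v
    have := huniq e (hS he) hv
    rwa [this] at he
  have h23 : s(2,3) ∈ S := leaf 3 _ (by decide)
  have h45 : s(4,5) ∈ S := leaf 5 _ (by decide)
  have h67 : s(6,7) ∈ S := leaf 7 _ (by decide)
  have h89 : s(8,9) ∈ S := leaf 9 _ (by decide)
  have h01 : s(0,1) ∈ S := by
    obtain ⟨e, he, hv⟩ := hcover 0
    have key : ∀ e ∈ Eds, (0:Fin 10) ∈ e → e = s(0,1) ∨ e = s(0,2) ∨ e = s(0,4) := by decide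
    have hmem := key e (hS he) hv
    rcases hmem with rfl | rfl | rfl
    · exact he
    · exact absurd he (fun he => hpw _ he _ h23 (by decide) 2 ⟨by decide, by decide⟩)
    · exact absurd he (fun he => hpw _ he _ h45 (by decide) 4 ⟨by decide, by decide⟩)
  have hsub : F5 ⊆ S := by
    intro e he
    have : e = s(0,1) ∨ e = s(2,3) ∨ e = s(4,5) ∨ e = s(6,7) ∨ e = s(8,9) := by
      revert he; revert e; decide
    rcases this with rfl | rfl | rfl | rfl | rfl <;> assumption
  have : F5.card = 5 := by decide
  exact (Finset.eq_of_subset_of_card_le hsub (by omega)).symm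

lemma nu_ds : matchingNumber doubleSpider = 5 := by
  apply matchingNumber_eq ds_adj
  · exact ⟨F5, by decide, by decide, by decide⟩
  · exact fun S hS hpw => card_le_five hS hpw

def Edel : Finset (Sym2 (Fin 10)) := {s(0,2), s(0,4), s(1,6), s(1,8)}

lemma del_adj : ∀ x y : Fin 10,
    (doubleSpider.deleteEdges ↑F5).Adj x y ↔ s(x,y) ∈ Edel := by
  intro x y
  rw [SimpleGraph.deleteEdges_adj, ds_adj, Finset.mem_coe]
  revert x y -- fails? need to re-generalize
  decide

lemma nu_del : matchingNumber (doubleSpider.deleteEdges ↑F5) = 2 := by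
  apply matchingNumber_eq del_adj
  · exact ⟨{s(0,2), s(1,6)}, by decide, by decide, by decide⟩
  · intro S hS hpw
    set T0 : Finset (Sym2 (Fin 10)) := {s(0,2), s(0,4)} with hT0
    set T1 : Finset (Sym2 (Fin 10)) := {s(1,6), s(1,8)} with hT1
    have hST : S = S ∩ T0 ∪ S ∩ T1 := by
      rw [← Finset.inter_union_distrib_left]
      have : Edel ⊆ T0 ∪ T1 := by decide
      exact (Finset.inter_eq_left.2 (fun e he => this (hS he))).symm
    calc S.card = (S ∩ T0 ∪ S ∩ T1).card := by rw [← hST]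
    _ ≤ (S ∩ T0).card + (S ∩ T1).card := Finset.card_union_le _ _
    _ ≤ 2 := by
        have := star_bound hpw 0 T0 (by decide)
        have := star_bound hpw 1 T1 (by decide)
        omega

lemma max_matching_unique {F : Set (Sym2 (Fin 10))} (hF : IsMaximumMatching doubleSpider F) :
    F = ↑F5 := by
  obtain ⟨hm, hc⟩ := hF
  obtain ⟨S, rfl, hSE, hSpw⟩ := (isMatching_iff ds_adj F).1 hm
  rw [Set.ncard_coe_finset, nu_ds] at hc
  rw [matching_five_unique hSE hSpw hc]

lemma F5_max : IsMaximumMatching doubleSpider ↑F5 := by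
  refine ⟨(isMatching_iff ds_adj _).2 ⟨F5, rfl, by decide, by decide⟩, ?_⟩
  rw [Set.ncard_coe_finset, nu_ds]; decide

lemma LNum_ds : LNum doubleSpider = 2 := by
  have hset : {n | ∃ F, IsMaximumMatching doubleSpider F ∧
      matchingNumber (doubleSpider.deleteEdges F) = n} = {2} := by
    ext n
    simp only [Set.mem_setOf_eq, Set.mem_singleton_iff]
    constructor
    · rintro ⟨F, hF, rfl⟩
      rw [max_matching_unique hF, nu_del]
    · rintro rfl
      exact ⟨↑F5, F5_max, nu_del⟩
  rw [LNum, hset, csSup_singleton]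

-- ν₂ = 8
def S1 : Finset (Sym2 (Fin 10)) := {s(2,3), s(0,4), s(6,7), s(1,8)}
def S2 : Finset (Sym2 (Fin 10)) := {s(0,2), s(4,5), s(1,6), s(8,9)}

lemma nu2_ds : nuK doubleSpider 2 = 8 := by
  have hmem : (8 : ℕ) ∈ {n | ∃ f : Fin 2 → Set (Sym2 (Fin 10)),
      (∀ i, IsMatchingSet doubleSpider (f i)) ∧ (⋃ i, f i).ncard = n} := by
    refine ⟨fun i => if i = 0 then ↑S1 else ↑S2, ?_, ?_⟩
    · intro i
      simp only []
      by_cases h : i = 0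
      · rw [if_pos h]
        exact (isMatching_iff ds_adj _).2 ⟨S1, rfl, by decide, by decide⟩
      · rw [if_neg h]
        exact (isMatching_iff ds_adj _).2 ⟨S2, rfl, by decide, by decide⟩
    · have : (⋃ i : Fin 2, (if i = 0 then (↑S1 : Set (Sym2 (Fin 10))) else ↑S2))
          = ↑(S1 ∪ S2) := by
        ext x
        simp [Set.mem_iUnion, Fin.exists_fin_two]
      rw [this, Set.ncard_coe_finset]
      decide
  have hub : ∀ n ∈ {n | ∃ f : Fin 2 → Set (Sym2 (Fin 10)),
      (∀ i, IsMatchingSet doubleSpider (f i)) ∧ (⋃ i, f i).ncard = n}, n ≤ 8 := by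
    rintro n ⟨f, hf, rfl⟩
    obtain ⟨T0, hT0, hT0E, hT0pw⟩ := (isMatching_iff ds_adj (f 0)).1 (hf 0)
    obtain ⟨T1, hT1, hT1E, hT1pw⟩ := (isMatching_iff ds_adj (f 1)).1 (hf 1)
    have : (⋃ i, f i) = ↑(T0 ∪ T1) := by
      ext x
      simp only [Set.mem_iUnion, Fin.exists_fin_two, ← hT0, ← hT1, Finset.coe_union,
        Set.mem_union]
    rw [this, Set.ncard_coe_finset]
    exact union_card_le_eight hT0E hT1E hT0pw hT1pw
  exact le_antisymm (csSup_le ⟨8, hmem⟩ hub) (le_csSup ⟨8, hub⟩ hmem)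

theorem doubleSpider_invariants :
    matchingNumber doubleSpider = 5 ∧ nuK doubleSpider 2 = 8 ∧ LNum doubleSpider = 2 := by
  exact ⟨nu_ds, nu2_ds, LNum_ds⟩
end
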